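/- Let ε be a real random variable with E[ε²] < ∞ and fix τ ∈ (0,1). Then the map t ↦ E[ρ_τ(ε − t)] is differentiable at every t ∈ ℝ with derivative −E[g_τ(ε − t)]. -/

import Mathlib

open MeasureTheory

noncomputable def rho (τ x : ℝ) : ℝ := |τ - (if x < 0 then 1 else 0)| * x ^ 2

noncomputable def g (τ x : ℝ) : ℝ := if 0 ≤ x then 2 * τ * x else 2 * (1 - τ) * x

lemma measurable_rho (τ : ℝ) : Measurable (rho τ) := by
  have h : Measurable (fun x : ℝ => if x < 0 then (1:ℝ) else 0) :=
    Measurable.ite (measurableSet_lt measurable_id measurable_const)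
      measurable_const measurable_const
  exact ((measurable_const.sub h).abs).mul (measurable_id.pow_const 2)

lemma measurable_g (τ : ℝ) : Measurable (g τ) :=
  Measurable.ite (measurableSet_le measurable_const measurable_id)
    (measurable_id.const_mul _) (measurable_id.const_mul _)

lemma abs_rho_le (τ : ℝ) (h0 : 0 < τ) (h1 : τ < 1) (x : ℝ) : |rho τ x| ≤ x ^ 2 := by
  unfold rho
  rw [abs_mul, abs_abs, abs_pow, sq_abs]
  split_ifs with h
  · rw [abs_sub_comm, abs_of_nonneg (show (0:ℝ) ≤ 1 - τ by linarith)]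
    nlinarith [sq_nonneg x]
  · rw [sub_zero, abs_of_pos h0]
    nlinarith [sq_nonneg x]

lemma abs_g_le (τ : ℝ) (h0 : 0 < τ) (h1 : τ < 1) (x : ℝ) : |g τ x| ≤ 2 * |x| := by
  unfold g
  split_ifs with h
  · rw [abs_mul]
    have h2 : |2 * τ| ≤ 2 := by rw [abs_of_nonneg (by linarith)]; linarith
    nlinarith [abs_nonneg x]
  · rw [abs_mul]
    have h2 : |2 * (1 - τ)| ≤ 2 := by rw [abs_of_nonneg (by linarith)]; linarith
    nlinarith [abs_nonneg x]

lemma hasDerivAt_rho (τ : ℝ) (h0 : 0 < τ) (h1 : τ < 1) (x : ℝ) :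
    HasDerivAt (rho τ) (g τ x) x := by
  rcases lt_trichotomy x 0 with hx | hx | hx
  · have heq : rho τ =ᶠ[nhds x] fun y => (1 - τ) * y ^ 2 := by
      filter_upwards [eventually_lt_nhds hx] with y hy
      show |τ - (if y < 0 then 1 else 0)| * y ^ 2 = (1 - τ) * y ^ 2
      rw [if_pos hy, abs_of_neg (show τ - 1 < 0 by linarith)]
      ring
    have hgx : g τ x = (1 - τ) * (2 * x) := by
      show (if 0 ≤ x then 2 * τ * x else 2 * (1 - τ) * x) = _
      rw [if_neg (not_le.mpr hx)]; ring
    have hd : HasDerivAt (fun y : ℝ => (1 - τ) * y ^ 2) (g τ x) x := by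
      rw [hgx]; simpa using ((hasDerivAt_pow 2 x).const_mul (1 - τ))
    exact hd.congr_of_eventuallyEq heq
  · subst hx
    have hg : g τ 0 = 0 := by simp [g]
    have hr0 : rho τ 0 = 0 := by simp [rho]
    rw [hg, hasDerivAt_iff_isLittleO]
    simp only [hr0, smul_zero, sub_zero]
    calc (fun y : ℝ => rho τ y)
        =O[nhds 0] (fun y : ℝ => y * y) := by
          apply Asymptotics.IsBigO.of_bound 1
          filter_upwards with y
          simpa [abs_mul, ← sq] using abs_rho_le τ h0 h1 y
      _ =o[nhds 0] (fun y : ℝ => y) := by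
          have h : (fun y : ℝ => y) =o[nhds 0] (fun _ : ℝ => (1 : ℝ)) := by
            rw [Asymptotics.isLittleO_iff_tendsto (by simp)]
            simpa using (continuousAt_id (x := (0:ℝ))).tendsto.div_const 1
          simpa using h.mul_isBigO (Asymptotics.isBigO_refl (fun y : ℝ => y) (nhds 0))
  · have heq : rho τ =ᶠ[nhds x] fun y => τ * y ^ 2 := by
      filter_upwards [eventually_gt_nhds hx] with y hy
      show |τ - (if y < 0 then 1 else 0)| * y ^ 2 = τ * y ^ 2
      rw [if_neg (not_lt.mpr hy.le), sub_zero, abs_of_pos h0]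
    have hgx : g τ x = τ * (2 * x) := by
      show (if 0 ≤ x then 2 * τ * x else 2 * (1 - τ) * x) = _
      rw [if_pos hx.le]; ring
    have hd : HasDerivAt (fun y : ℝ => τ * y ^ 2) (g τ x) x := by
      rw [hgx]; simpa using ((hasDerivAt_pow 2 x).const_mul τ)
    exact hd.congr_of_eventuallyEq heq

theorem expected_loss_hasDerivAt {Ω : Type*} [MeasurableSpace Ω]
    (μ : Measure Ω) [IsProbabilityMeasure μ] (ε : Ω → ℝ) (hmeas : Measurable ε)
    (hint : Integrable (fun ω => (ε ω) ^ 2) μ)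
    (τ : ℝ) (hτ : τ ∈ Set.Ioo (0 : ℝ) 1) (t : ℝ) :
    HasDerivAt (fun s => ∫ ω, rho τ (ε ω - s) ∂μ)
      (-(∫ ω, g τ (ε ω - t) ∂μ)) t := by
  obtain ⟨h0, h1⟩ := hτ
  -- ε is integrable
  have hε1 : Integrable ε μ := by
    have h2 : MemLp ε 2 μ := (memLp_two_iff_integrable_sq hmeas.aestronglyMeasurable).mpr hint
    exact memLp_one_iff_integrable.mp (h2.mono_exponent (by norm_num))
  set F : ℝ → Ω → ℝ := fun s ω => rho τ (ε ω - s) with hF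
  set F' : ℝ → Ω → ℝ := fun s ω => -(g τ (ε ω - s)) with hF'
  set bound : Ω → ℝ := fun ω => 2 * (|ε ω| + |t| + 1) with hbound
  have hres := hasDerivAt_integral_of_dominated_loc_of_deriv_le
    (F := F) (F' := F') (x₀ := t) (bound := bound) (μ := μ) (s := Metric.ball t 1) (Metric.ball_mem_nhds t one_pos)
    (Filter.Eventually.of_forall fun s =>
      ((measurable_rho τ).comp (hmeas.sub measurable_const)).aestronglyMeasurable)
    ?_ (((measurable_g τ).comp (hmeas.sub measurable_const)).neg.aestronglyMeasurable)
    ?_ ?_ ?_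
  · have := hres.2
    simpa [F', integral_neg] using this
  · -- integrability of F t
    have hig : Integrable (fun ω => (ε ω - t) ^ 2) μ := by
      have : Integrable (fun ω => (ε ω) ^ 2 - 2 * t * ε ω + t ^ 2) μ :=
        (hint.sub (hε1.const_mul (2 * t))).add (integrable_const _)
      convert this using 2 with ω
      ring
    refine hig.mono' ((measurable_rho τ).comp
      (hmeas.sub measurable_const)).aestronglyMeasurable ?_
    filter_upwards with ω
    simpa using abs_rho_le τ h0 h1 (ε ω - t)
  · -- bound
    filter_upwards with ω s hs
    have hst : |s - t| < 1 := by simpa [Real.dist_eq] using hs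
    have : |ε ω - s| ≤ |ε ω| + |t| + 1 := by
      have := abs_sub_abs_le_abs_sub s t
      calc |ε ω - s| ≤ |ε ω| + |s| := abs_sub _ _
        _ ≤ |ε ω| + (|t| + 1) := by have := abs_sub_abs_le_abs_sub s t; linarith
        _ = |ε ω| + |t| + 1 := by ring
    calc ‖F' s ω‖ = |g τ (ε ω - s)| := by simp [F']
      _ ≤ 2 * |ε ω - s| := abs_g_le τ h0 h1 _
      _ ≤ bound ω := by simp only [hbound]; linarith
  · -- integrability of bound
    have : Integrable (fun ω => 2 * (|ε ω| + |t| + 1)) μ :=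
      ((hε1.abs.add (integrable_const _)).add (integrable_const _)).const_mul 2
    simpa [hbound, add_assoc] using this
  · -- derivative
    filter_upwards with ω s hs
    have hcomp : HasDerivAt (fun s : ℝ => ε ω - s) (-1) s := by
      simpa using (hasDerivAt_id s).const_sub (ε ω)
    have := (hasDerivAt_rho τ h0 h1 (ε ω - s)).comp s hcomp
    simpa [F, F', mul_comm, Function.comp_def] using this
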